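/- Let G be a simple graph on n vertices that is not regular. Then σ_t(G) ≥ n - 1 if n is odd, and σ_t(G) ≥ 2n - 4 if n is even. -/

import Mathlib

open Finset

noncomputable def sigmaT {V : Type*} [Fintype V] (G : SimpleGraph V) [DecidableRel G.Adj] : ℝ :=
  (∑ u : V, ∑ v : V, ((G.degree u : ℝ) - (G.degree v : ℝ)) ^ 2) / 2

theorem stmt17 {V : Type*} [Fintype V] (G : SimpleGraph V) [DecidableRel G.Adj]
    (hirreg : ¬ ∃ d : ℕ, G.IsRegularOfDegree d) (n : ℕ) (hn : n = Fintype.card V) :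
    (Odd n → sigmaT G ≥ (n : ℝ) - 1) ∧ (Even n → sigmaT G ≥ 2 * (n : ℝ) - 4) := by
  classical
  have hne : Nonempty V := by
    by_contra h
    exact hirreg ⟨0, fun v => absurd ⟨v⟩ h⟩
  set D : V → ℕ := fun v => G.degree v with hD
  obtain ⟨u₀, -, hmin⟩ := Finset.exists_min_image univ D ⟨Classical.arbitrary V, mem_univ _⟩
  obtain ⟨v₀, -, hmax⟩ := Finset.exists_max_image univ D ⟨Classical.arbitrary V, mem_univ _⟩
  have hlt : D u₀ < D v₀ := by
    rcases lt_or_ge (D u₀) (D v₀) with h | h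
    · exact h
    · exact absurd ⟨D u₀, fun v =>
        le_antisymm (le_trans (hmax v (mem_univ v)) h) (hmin v (mem_univ v))⟩ hirreg
  have hne' : u₀ ≠ v₀ := fun h => by rw [h] at hlt; exact lt_irrefl _ hlt
  have hn2 : 2 ≤ n := by
    rw [hn]
    exact Fintype.one_lt_card_iff.mpr ⟨u₀, v₀, hne'⟩
  have hcard : (Finset.univ : Finset V).card = n := by rw [hn, Fintype.card]
  have hσ : sigmaT G = (∑ u : V, ∑ v : V, ((D u : ℝ) - (D v : ℝ)) ^ 2) / 2 := rfl
  by_cases hcase : D v₀ = D u₀ + 1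
  · -- all degrees are D u₀ or D u₀ + 1
    have hAB : ∀ v, D v = D u₀ ∨ D v = D u₀ + 1 := by
      intro v
      have h1 := hmin v (mem_univ v)
      have h2 := hmax v (mem_univ v)
      omega
    set A : Finset V := univ.filter (fun v => D v = D u₀) with hA
    set B : Finset V := univ.filter (fun v => ¬ D v = D u₀) with hB
    have hBmem : ∀ v ∈ B, D v = D u₀ + 1 := by
      intro v hv
      rcases hAB v with h | h
      · simp [hB, h] at hv
      · exact h
    set a : ℕ := A.card with ha
    set b : ℕ := B.card with hb
    have hab : a + b = n := by
      rw [ha, hb, ← hcard]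
      exact Finset.card_filter_add_card_filter_not _
    have haA : u₀ ∈ A := by simp [hA]
    have hbB : v₀ ∈ B := by simp [hB]; omega
    have ha1 : 1 ≤ a := Finset.card_pos.mpr ⟨u₀, haA⟩
    have hb1 : 1 ≤ b := Finset.card_pos.mpr ⟨v₀, hbB⟩
    -- row sums
    have rowA : ∀ u ∈ A, (∑ v : V, ((D u : ℝ) - (D v : ℝ)) ^ 2) = b := by
      intro u hu
      have hu' : D u = D u₀ := by simp [hA] at hu; exact hu
      rw [← Finset.sum_filter_add_sum_filter_not univ (fun v => D v = D u₀)]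
      rw [show (univ.filter (fun v => D v = D u₀)) = A from rfl,
          show (univ.filter (fun v => ¬ D v = D u₀)) = B from rfl]
      have e1 : (∑ v ∈ A, ((D u : ℝ) - (D v : ℝ)) ^ 2) = 0 := by
        apply Finset.sum_eq_zero
        intro v hv
        have : D v = D u₀ := by simp [hA] at hv; exact hv
        rw [this, hu']; ring
      have e2 : (∑ v ∈ B, ((D u : ℝ) - (D v : ℝ)) ^ 2) = b := by
        rw [show (b : ℝ) = ∑ v ∈ B, (1 : ℝ) by simp [hb]]
        apply Finset.sum_congr rfl
        intro v hv
        rw [hBmem v hv, hu']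
        push_cast; ring
      rw [e1, e2, zero_add]
    have rowB : ∀ u ∈ B, (∑ v : V, ((D u : ℝ) - (D v : ℝ)) ^ 2) = a := by
      intro u hu
      have hu' : D u = D u₀ + 1 := hBmem u hu
      rw [← Finset.sum_filter_add_sum_filter_not univ (fun v => D v = D u₀)]
      rw [show (univ.filter (fun v => D v = D u₀)) = A from rfl,
          show (univ.filter (fun v => ¬ D v = D u₀)) = B from rfl]
      have e1 : (∑ v ∈ A, ((D u : ℝ) - (D v : ℝ)) ^ 2) = a := by
        rw [show (a : ℝ) = ∑ v ∈ A, (1 : ℝ) by simp [ha]]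
        apply Finset.sum_congr rfl
        intro v hv
        have : D v = D u₀ := by simp [hA] at hv; exact hv
        rw [this, hu']; push_cast; ring
      have e2 : (∑ v ∈ B, ((D u : ℝ) - (D v : ℝ)) ^ 2) = 0 := by
        apply Finset.sum_eq_zero
        intro v hv
        rw [hBmem v hv, hu']; ring
      rw [e1, e2, add_zero]
    have hS : (∑ u : V, ∑ v : V, ((D u : ℝ) - (D v : ℝ)) ^ 2) = 2 * a * b := by
      rw [← Finset.sum_filter_add_sum_filter_not univ (fun v => D v = D u₀)]
      rw [show (univ.filter (fun v => D v = D u₀)) = A from rfl,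
          show (univ.filter (fun v => ¬ D v = D u₀)) = B from rfl]
      rw [Finset.sum_congr rfl rowA, Finset.sum_congr rfl rowB]
      simp [ha, hb]; ring
    have hσab : sigmaT G = (a : ℝ) * b := by rw [hσ, hS]; ring
    constructor
    · intro _
      have h1 : (1:ℝ) ≤ a := by exact_mod_cast ha1
      have h2 : (1:ℝ) ≤ b := by exact_mod_cast hb1
      have h3 : (a:ℝ) + b = n := by exact_mod_cast hab
      rw [hσab]
      nlinarith [mul_nonneg (sub_nonneg.mpr h1) (sub_nonneg.mpr h2)]
    · intro hev
      -- handshake: sum of degrees is even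
      have hhs : Even (∑ v : V, D v) := by
        rw [hD]
        exact ⟨G.edgeFinset.card, by rw [G.sum_degrees_eq_twice_card_edges]; ring⟩
      have hsum : (∑ v : V, D v) = a * D u₀ + b * (D u₀ + 1) := by
        rw [← Finset.sum_filter_add_sum_filter_not univ (fun v => D v = D u₀)]
        rw [show (univ.filter (fun v => D v = D u₀)) = A from rfl,
            show (univ.filter (fun v => ¬ D v = D u₀)) = B from rfl]
        rw [Finset.sum_congr rfl (fun v hv => by
              simp [hA] at hv; exact hv : ∀ v ∈ A, D v = D u₀),
            Finset.sum_congr rfl hBmem]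
        simp [mul_comm]; rfl
      have hsum' : (∑ v : V, D v) = n * D u₀ + b := by
        rw [hsum, ← hab]; ring
      have hbeven : Even b := by
        rw [hsum'] at hhs
        exact (Nat.even_add.mp hhs).mp (hev.mul_right _)
      have haeven : Even a := by
        rw [Nat.even_iff] at hbeven hev ⊢
        omega
      have ha2 : 2 ≤ a := by
        rw [Nat.even_iff] at haeven; omega
      have hb2 : 2 ≤ b := by
        rw [Nat.even_iff] at hbeven; omega
      have h1 : (2:ℝ) ≤ a := by exact_mod_cast ha2
      have h2 : (2:ℝ) ≤ b := by exact_mod_cast hb2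
      have h3 : (a:ℝ) + b = n := by exact_mod_cast hab
      rw [hσab]
      nlinarith [mul_nonneg (sub_nonneg.mpr h1) (sub_nonneg.mpr h2)]
  · -- gap at least 2
    have hgapn : D u₀ + 2 ≤ D v₀ := by omega
    have hgap : ((D v₀ : ℝ) - D u₀) ^ 2 ≥ 4 := by
      have : (D u₀ : ℝ) + 2 ≤ D v₀ := by exact_mod_cast hgapn
      nlinarith
    have key : ∀ v : V, ((D u₀ : ℝ) - D v) ^ 2 + ((D v₀ : ℝ) - D v) ^ 2 ≥ 2 := by
      intro v
      nlinarith [sq_nonneg ((D u₀ : ℝ) + (D v₀ : ℝ) - 2 * (D v : ℝ)), hgap]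
    set s : Finset V := {u₀, v₀} with hs
    have hssub : s ⊆ univ := Finset.subset_univ _
    have hscard : s.card = 2 := Finset.card_pair hne'
    -- rows in univ \ s
    have hrow : ∀ u : V, (∑ v : V, ((D u : ℝ) - (D v : ℝ)) ^ 2) ≥ 2 := by
      intro u
      have h1 : (∑ v ∈ s, ((D u : ℝ) - (D v : ℝ)) ^ 2) ≤
          ∑ v : V, ((D u : ℝ) - (D v : ℝ)) ^ 2 := by
        apply Finset.sum_le_sum_of_subset_of_nonneg hssub
        intro i _ _; positivity
      have h2 : (∑ v ∈ s, ((D u : ℝ) - (D v : ℝ)) ^ 2) =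
          ((D u : ℝ) - D u₀) ^ 2 + ((D u : ℝ) - D v₀) ^ 2 := by
        rw [hs, Finset.sum_pair hne']
      have h3 := key u
      nlinarith [h1, h2]
    have hS : (∑ u : V, ∑ v : V, ((D u : ℝ) - (D v : ℝ)) ^ 2) ≥ 4 * n - 4 := by
      rw [← Finset.sum_sdiff hssub]
      have hpart1 : (∑ u ∈ univ \ s, ∑ v : V, ((D u : ℝ) - (D v : ℝ)) ^ 2) ≥
          2 * ((n : ℝ) - 2) := by
        have hc : (univ \ s).card = n - 2 := by
          rw [Finset.card_sdiff_of_subset hssub, hscard, hcard]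
        calc (∑ u ∈ univ \ s, ∑ v : V, ((D u : ℝ) - (D v : ℝ)) ^ 2)
            ≥ ∑ u ∈ univ \ s, (2:ℝ) := Finset.sum_le_sum (fun u _ => hrow u)
          _ = 2 * ((n:ℝ) - 2) := by
              rw [Finset.sum_const, hc, nsmul_eq_mul, Nat.cast_sub hn2]
              push_cast; ring
      have hpart2 : (∑ u ∈ s, ∑ v : V, ((D u : ℝ) - (D v : ℝ)) ^ 2) ≥ 2 * n := by
        rw [hs, Finset.sum_pair hne', ← Finset.sum_add_distrib]
        calc (∑ v : V, (((D u₀ : ℝ) - (D v : ℝ)) ^ 2 + ((D v₀ : ℝ) - (D v : ℝ)) ^ 2))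
            ≥ ∑ v : V, (2:ℝ) := Finset.sum_le_sum (fun v _ => key v)
          _ = 2 * n := by rw [Finset.sum_const, hcard, nsmul_eq_mul]; ring
      linarith
    have hσge : sigmaT G ≥ 2 * (n:ℝ) - 2 := by rw [hσ]; linarith
    have hncast : (2:ℝ) ≤ n := by exact_mod_cast hn2
    exact ⟨fun _ => by linarith, fun _ => by linarith⟩
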